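/- arXiv:1802.03624 — 2 statements merged into one kernel-verified Lean document; each statement's English description precedes it below -/
import Mathlib

section
/- Let G be a subgroup of GL(m,ℝ) such that det(A - I) = 0 for every A ∈ G (G is 1-spectral). Then for every element v in a sufficiently small neighborhood of 0 in the Lie algebra of G on which the matrix logarithm is defined, det(v) = 0. Consequently, if G is a 1-spectral Lie subgroup, every element of its Lie algebra is a singular matrix. -/
open Matrix
open scoped Nat

section Aux

variable {B : Type*} [NormedRing B] [NormedAlgebra ℝ B] [CompleteSpace B] [NormOneClass B]

private lemma aux_summable (x : B) :
    Summable (fun n : ℕ => (((n + 1)! : ℝ))⁻¹ • x ^ n) := by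
  apply Summable.of_norm_bounded (Real.summable_pow_div_factorial ‖x‖)
  intro n
  rw [norm_smul]
  have h1 : ‖x ^ n‖ ≤ ‖x‖ ^ n := norm_pow_le x n
  have h2 : ‖(((n + 1)! : ℝ))⁻¹‖ ≤ ((n ! : ℝ))⁻¹ := by
    rw [Real.norm_eq_abs, abs_of_nonneg (by positivity)]
    apply inv_anti₀ (by positivity)
    exact_mod_cast Nat.factorial_le (Nat.le_succ n)
  calc ‖(((n + 1)! : ℝ))⁻¹‖ * ‖x ^ n‖ ≤ ((n ! : ℝ))⁻¹ * ‖x‖ ^ n := by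
        apply mul_le_mul h2 h1 (norm_nonneg _) (by positivity)
    _ = ‖x‖ ^ n / (n ! : ℝ) := by ring

/-- In a Banach algebra, `exp x - 1 = x * y` for an explicit `y` which is a unit
when `‖x‖ < 1/2`. -/
private lemma exp_sub_one_factor (x : B) (hx : ‖x‖ < 1 / 2) :
    ∃ y : B, IsUnit y ∧ NormedSpace.exp x - 1 = x * y := by
  set y : B := ∑' n : ℕ, (((n + 1)! : ℝ))⁻¹ • x ^ n with hy
  have hsum := aux_summable x
  have hterm : ∀ n : ℕ, ‖((((n + 1) + 1)! : ℝ))⁻¹ • x ^ (n + 1)‖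
      ≤ (1 / 4 : ℝ) * (1 / 2) ^ n := by
    intro n
    rw [norm_smul]
    have h1 : ‖x ^ (n + 1)‖ ≤ (1 / 2 : ℝ) ^ (n + 1) :=
      le_trans (norm_pow_le x (n + 1)) (pow_le_pow_left₀ (norm_nonneg x) hx.le _)
    have h2 : ‖((((n + 1) + 1)! : ℝ))⁻¹‖ ≤ 1 / 2 := by
      rw [Real.norm_eq_abs, abs_of_nonneg (by positivity)]
      rw [inv_le_comm₀ (by positivity) (by norm_num)]
      have : (2 : ℕ) ≤ ((n + 1) + 1)! :=
        Nat.self_le_factorial 2 |>.trans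
          (Nat.factorial_le (by omega))
      norm_num
      exact_mod_cast this
    calc ‖((((n + 1) + 1)! : ℝ))⁻¹‖ * ‖x ^ (n + 1)‖
        ≤ (1 / 2) * (1 / 2 : ℝ) ^ (n + 1) := by
          apply mul_le_mul h2 h1 (norm_nonneg _) (by norm_num)
      _ = (1 / 4 : ℝ) * (1 / 2) ^ n := by ring
  refine ⟨y, ?_, ?_⟩
  · -- `y` is a unit since `‖1 - y‖ < 1`
    have hsplit : y = 1 + ∑' n : ℕ, ((((n + 1) + 1)! : ℝ))⁻¹ • x ^ (n + 1) := by
      rw [hy, Summable.tsum_eq_zero_add hsum]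
      norm_num
    have hgeom : HasSum (fun n : ℕ => (1 / 4 : ℝ) * (1 / 2) ^ n) (1 / 2 : ℝ) := by
      have := (hasSum_geometric_of_lt_one (by norm_num : (0:ℝ) ≤ 1/2)
        (by norm_num : (1/2:ℝ) < 1)).mul_left (1 / 4 : ℝ)
      convert this using 1
      · rfl
      norm_num
    have hnorm : ‖∑' n : ℕ, ((((n + 1) + 1)! : ℝ))⁻¹ • x ^ (n + 1)‖ ≤ 1 / 2 :=
      tsum_of_norm_bounded hgeom hterm
    have h1y : ‖1 - y‖ < 1 := by
      rw [hsplit]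
      rw [sub_add_eq_sub_sub, sub_self, zero_sub, norm_neg]
      linarith
    have := (Units.oneSub (1 - y) h1y).isUnit
    simpa [sub_sub_cancel] using this
  · -- `exp x - 1 = x * y`
    have hmul : x * y = ∑' n : ℕ, (((n + 1)! : ℝ))⁻¹ • x ^ (n + 1) := by
      rw [hy, ← hsum.tsum_mul_left x]
      congr 1
      funext n
      rw [mul_smul_comm, ← pow_succ']
    have hexp : NormedSpace.exp x
        = 1 + ∑' n : ℕ, (((n + 1)! : ℝ))⁻¹ • x ^ (n + 1) := by
      rw [NormedSpace.exp_eq_tsum (𝕂 := ℝ)]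
      beta_reduce
      rw [Summable.tsum_eq_zero_add (NormedSpace.expSeries_summable' (𝕂 := ℝ) x)]
      norm_num
    rw [hexp, hmul, add_sub_cancel_left]

end Aux

set_option maxHeartbeats 1000000

/-- If `G ≤ GL(m,ℝ)` is 1-spectral (`det (A - id) = 0` for all `A ∈ G`), then every
element `v` of a sufficiently small neighborhood of `0` in `gl(m,ℝ)` (on which the
matrix logarithm is defined, i.e. `v = log A` for some `A ∈ G`, equivalently
`exp v ∈ G` with `v` small) satisfies `det v = 0`.  In particular, the Lie algebra
of a 1-spectral Lie subgroup is singular. -/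
theorem lie_algebra_singular_of_one_spectral (m : ℕ)
    (G : Subgroup (Matrix.GeneralLinearGroup (Fin m) ℝ))
    (hspec : ∀ A ∈ G, ((A : Matrix (Fin m) (Fin m) ℝ) - 1).det = 0) :
    ∃ U ∈ nhds (0 : Matrix (Fin m) (Fin m) ℝ), ∀ v ∈ U,
      (∃ A ∈ G, (A : Matrix (Fin m) (Fin m) ℝ) = NormedSpace.exp v) →
        v.det = 0 := by
  -- the degenerate case `m = 0` : `hspec` is contradictory
  rcases Nat.eq_zero_or_pos m with hm | hm
  · subst hm
    exact absurd (hspec 1 G.one_mem) (by simp [Matrix.det_fin_zero])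
  haveI : NeZero m := ⟨hm.ne'⟩
  -- the Banach algebra of continuous linear endomorphisms of Euclidean space
  set eqv := Matrix.toEuclideanCLM (𝕜 := ℝ) (n := Fin m) with heqv
  -- linear map versions of `φ` and `eqv.symm`, for continuity
  let eqvL : Matrix (Fin m) (Fin m) ℝ →ₗ[ℝ] (EuclideanSpace ℝ (Fin m) →L[ℝ] EuclideanSpace ℝ (Fin m)) :=
    { toFun := eqv, map_add' := fun a b => map_add eqv a b,
      map_smul' := fun c a => map_smul eqv c a }
  let psiL : (EuclideanSpace ℝ (Fin m) →L[ℝ] EuclideanSpace ℝ (Fin m)) →ₗ[ℝ] Matrix (Fin m) (Fin m) ℝ :=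
    { toFun := eqv.symm, map_add' := fun a b => map_add eqv.symm a b,
      map_smul' := fun c a => map_smul eqv.symm c a }
  have heqvc : Continuous eqvL := eqvL.continuous_of_finiteDimensional
  have hψc : Continuous psiL := psiL.continuous_of_finiteDimensional
  refine ⟨(fun v => eqv v) ⁻¹' Metric.ball 0 (1 / 2), ?_, ?_⟩
  · apply heqvc.continuousAt.preimage_mem_nhds
    simp only [eqvL, LinearMap.coe_mk, AddHom.coe_mk]
    rw [map_zero]
    exact Metric.ball_mem_nhds _ (by norm_num)
  intro v hv ⟨A, hA, hAv⟩
  by_contra hdet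
  -- `v` is a unit, so is `eqv v`
  have hvunit : IsUnit v := (Matrix.isUnit_iff_isUnit_det v).2 (isUnit_iff_ne_zero.2 hdet)
  have hw : ‖eqv v‖ < 1 / 2 := by simpa using hv
  obtain ⟨y, hyunit, hfac⟩ := exp_sub_one_factor (eqv v) hw
  -- transfer `exp` along `φ`
  have hexpv : NormedSpace.exp v = eqv.symm (NormedSpace.exp (eqv v)) := by
    have h1 : HasSum (fun n : ℕ => ((n ! : ℝ))⁻¹ • (eqv v) ^ n)
        (NormedSpace.exp (eqv v)) := NormedSpace.exp_series_hasSum_exp' (eqv v)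
    have h2 : HasSum (fun n : ℕ => psiL (((n ! : ℝ))⁻¹ • (eqv v) ^ n))
        (psiL (NormedSpace.exp (eqv v))) := h1.mapL (psiL.toContinuousLinearMap)
    have h3 : (fun n : ℕ => psiL (((n ! : ℝ))⁻¹ • (eqv v) ^ n))
        = fun n : ℕ => ((n ! : ℝ))⁻¹ • v ^ n := by
      funext n
      show eqv.symm (((n ! : ℝ))⁻¹ • (eqv v) ^ n) = ((n ! : ℝ))⁻¹ • v ^ n
      rw [_root_.map_smul, _root_.map_pow, StarAlgEquiv.symm_apply_apply]
    rw [h3] at h2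
    rw [NormedSpace.exp_eq_tsum (𝕂 := ℝ)]
    exact h2.tsum_eq
  -- hence `exp v - 1` is a unit
  have hunit2 : IsUnit (NormedSpace.exp (eqv v) - 1) := by
    rw [hfac]
    exact (hvunit.map eqv).mul hyunit
  have hunit3 : IsUnit (NormedSpace.exp v - 1) := by
    rw [hexpv, ← _root_.map_one eqv.symm, ← _root_.map_sub]
    exact hunit2.map eqv.symm
  rw [← hAv] at hunit3
  have := (Matrix.isUnit_iff_isUnit_det _).1 hunit3
  rw [hspec A hA] at this
  exact (isUnit_iff_ne_zero.1 this) rfl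
end

section
/- Let I, J be endomorphisms of the tangent bundle of a manifold M with I² = -id, J² = id, IJ = -JI, the ±1-eigendistributions H, V of J involutive, and the Nijenhuis tensor of I vanishing. Then for every z = a+bi ∈ S¹ ⊂ ℂ, the endomorphism J_z(X) = a·J(X) + b·I(J(X)) satisfies J_z² = id and its ±1-eigendistributions, namely (1+z)H and (1+z)V (in the complex structure on TM given by I), are involutive. -/
open scoped Manifold

section

variable {E : Type*} [NormedAddCommGroup E] [NormedSpace ℝ E]
  {Hm : Type*} [TopologicalSpace Hm] (I : ModelWithCorners ℝ E Hm)
  (M : Type*) [TopologicalSpace M] [ChartedSpace Hm M] [IsManifold I (⊤ : ℕ∞) M]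

local notation "VF" => Derivation ℝ C^(⊤ : ℕ∞)⟮I, M; ℝ⟯ C^(⊤ : ℕ∞)⟮I, M; ℝ⟯

set_option maxHeartbeats 1600000 in
/-- Let `(Iop, Jop)` be a para-hypercomplex structure on `M`: `Iop² = -id`,
`Jop² = id`, `Iop Jop = -Jop Iop`, the `±1`-eigendistributions `H`, `V` of `Jop`
involutive and the Nijenhuis tensor of `Iop` vanishing.  Then for every
`z = a + b i ∈ S¹`, the endomorphism `J_z X = a·Jop X + b·Iop (Jop X)` satisfies
`J_z² = id`, its `±1`-eigendistributions are `(1+z)H` and `(1+z)V` (where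
`(1+z)·X = (1+a)X + b·Iop X`), and these are involutive. -/
theorem para_complex_rotation (Iop Jop : VF →ₗ[C^(⊤ : ℕ∞)⟮I, M; ℝ⟯] VF)
    (hI2 : ∀ X : VF, Iop (Iop X) = -X)
    (hJ2 : ∀ X : VF, Jop (Jop X) = X)
    (hIJ : ∀ X : VF, Iop (Jop X) = -(Jop (Iop X)))
    (hNI : ∀ X Y : VF,
      -(Iop (Iop ⁅X, Y⁆)) + Iop (⁅Iop X, Y⁆ + ⁅X, Iop Y⁆) - ⁅Iop X, Iop Y⁆ = 0)
    (hHinv : ∀ X Y : VF, Jop X = X → Jop Y = Y → Jop ⁅X, Y⁆ = ⁅X, Y⁆)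
    (hVinv : ∀ X Y : VF, Jop X = -X → Jop Y = -Y → Jop ⁅X, Y⁆ = -⁅X, Y⁆)
    (a b : ℝ) (hz : a ^ 2 + b ^ 2 = 1) :
    let Jz : VF → VF := fun X => a • Jop X + b • Iop (Jop X)
    let mulOnePlusZ : VF → VF := fun X => (1 + a) • X + b • Iop X
    (∀ X : VF, Jz (Jz X) = X) ∧
    (∀ X : VF, Jop X = X → Jz (mulOnePlusZ X) = mulOnePlusZ X) ∧
    (∀ X : VF, Jop X = -X → Jz (mulOnePlusZ X) = -(mulOnePlusZ X)) ∧
    (∀ X Y : VF, Jop X = X → Jop Y = Y →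
      ∃ Z : VF, Jop Z = Z ∧ ⁅mulOnePlusZ X, mulOnePlusZ Y⁆ = mulOnePlusZ Z) ∧
    (∀ X Y : VF, Jop X = -X → Jop Y = -Y →
      ∃ Z : VF, Jop Z = -Z ∧ ⁅mulOnePlusZ X, mulOnePlusZ Y⁆ = mulOnePlusZ Z) := by
  have hJI : ∀ X : VF, Jop (Iop X) = -(Iop (Jop X)) := fun X => by rw [hIJ, neg_neg]
  -- bilinearity of the commutator bracket of derivations, stated with the
  -- `Derivation.instBracket` instance so that `simp`/`rw` can use them
  have hAL : ∀ X' Y' Z' : VF, ⁅X' + Y', Z'⁆ = ⁅X', Z'⁆ + ⁅Y', Z'⁆ := by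
    intro X' Y' Z'; ext f
    simp only [Derivation.commutator_apply, Derivation.add_apply, map_add]; ring
  have hLA : ∀ X' Y' Z' : VF, ⁅X', Y' + Z'⁆ = ⁅X', Y'⁆ + ⁅X', Z'⁆ := by
    intro X' Y' Z'; ext f
    simp only [Derivation.commutator_apply, Derivation.add_apply, map_add]; ring
  have hSL : ∀ (r : ℝ) (X' Y' : VF), ⁅r • X', Y'⁆ = r • ⁅X', Y'⁆ := by
    intro r X' Y'; ext f
    simp only [Derivation.commutator_apply, Derivation.smul_apply,
      Derivation.map_smul, map_smul, smul_sub]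
  have hLS : ∀ (r : ℝ) (X' Y' : VF), ⁅X', r • Y'⁆ = r • ⁅X', Y'⁆ := by
    intro r X' Y'; ext f
    simp only [Derivation.commutator_apply, Derivation.smul_apply,
      Derivation.map_smul, map_smul, smul_sub]
  intro Jz mulOnePlusZ
  refine ⟨?_, ?_, ?_, ?_, ?_⟩
  · intro X
    simp only [Jz, map_add, LinearMap.map_smul_of_tower, hJI, hJ2, map_neg, smul_neg, hI2]
    match_scalars <;>
      first
      | ring1
      | linear_combination hz
      | linear_combination -hz
      | linear_combination (2:ℝ) * hz
      | linear_combination (-2:ℝ) * hz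
  · intro X hX
    simp only [Jz, mulOnePlusZ, map_add, LinearMap.map_smul_of_tower, hJI, hX, map_neg,
      smul_neg, hI2]
    match_scalars <;>
      first
      | ring1
      | linear_combination hz
      | linear_combination -hz
      | linear_combination (2:ℝ) * hz
      | linear_combination (-2:ℝ) * hz
  · intro X hX
    simp only [Jz, mulOnePlusZ, map_add, LinearMap.map_smul_of_tower, hJI, hX, map_neg,
      smul_neg, neg_neg, hI2]
    match_scalars <;>
      first
      | ring1
      | linear_combination hz
      | linear_combination -hz
      | linear_combination (2:ℝ) * hz
      | linear_combination (-2:ℝ) * hz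
  · -- the horizontal distribution
    intro X Y hX hY
    have hJW : Jop ⁅X, Y⁆ = ⁅X, Y⁆ := hHinv X Y hX hY
    have hJIX : Jop (Iop X) = -(Iop X) := by rw [hJI, hX]
    have hJIY : Jop (Iop Y) = -(Iop Y) := by rw [hJI, hY]
    have hbr : ⁅Iop X, Iop Y⁆ = ⁅X, Y⁆ + Iop (⁅Iop X, Y⁆ + ⁅X, Iop Y⁆) := by
      have h1 := hNI X Y
      rw [hI2, neg_neg] at h1
      linear_combination (norm := module) -h1
    have hJB : Jop ⁅Iop X, Iop Y⁆ = -⁅Iop X, Iop Y⁆ := hVinv _ _ hJIX hJIY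
    rw [hbr, map_add, hJW, hJI] at hJB
    have h2 : Iop (Jop (⁅Iop X, Y⁆ + ⁅X, Iop Y⁆)) =
        (2:ℝ) • ⁅X, Y⁆ + Iop (⁅Iop X, Y⁆ + ⁅X, Iop Y⁆) := by
      linear_combination (norm := module) -hJB
    have hJS : Jop (⁅Iop X, Y⁆ + ⁅X, Iop Y⁆) =
        (⁅Iop X, Y⁆ + ⁅X, Iop Y⁆) - (2:ℝ) • Iop ⁅X, Y⁆ := by
      have h5 : Iop ((2:ℝ) • ⁅X, Y⁆ + Iop (⁅Iop X, Y⁆ + ⁅X, Iop Y⁆)) =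
          (2:ℝ) • Iop ⁅X, Y⁆ - (⁅Iop X, Y⁆ + ⁅X, Iop Y⁆) := by
        rw [map_add, LinearMap.map_smul_of_tower, hI2]
        module
      have h4 := congrArg Iop h2
      rw [hI2, h5] at h4
      linear_combination (norm := module) -h4
    refine ⟨(1 + a) • ⁅X, Y⁆ + b • (⁅Iop X, Y⁆ + ⁅X, Iop Y⁆) - b • Iop ⁅X, Y⁆, ?_, ?_⟩
    · rw [map_sub, map_add, LinearMap.map_smul_of_tower, LinearMap.map_smul_of_tower,
        LinearMap.map_smul_of_tower, hJS, hJW, hJI, hJW]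
      module
    · simp only [mulOnePlusZ, hAL, hLA, hSL, hLS, hbr, map_sub, map_add,
        LinearMap.map_smul_of_tower, hI2]
      match_scalars <;>
        first
        | ring1
        | linear_combination hz
        | linear_combination -hz
        | linear_combination b * hz
        | linear_combination -b * hz
        | linear_combination (2*b) * hz
        | linear_combination (-(2*b)) * hz
        | linear_combination (b*(1+a)) * hz
        | linear_combination (-(b*(1+a))) * hz
        | linear_combination (b^2) * hz
        | linear_combination (-(b^2)) * hz
        | linear_combination (2:ℝ) * hz
        | linear_combination (-2:ℝ) * hz
        | linear_combination (1+a) * hz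
        | linear_combination (-(1+a)) * hz
  · -- the vertical distribution
    intro X Y hX hY
    have hJW : Jop ⁅X, Y⁆ = -⁅X, Y⁆ := hVinv X Y hX hY
    have hJIX : Jop (Iop X) = Iop X := by rw [hJI, hX, map_neg, neg_neg]
    have hJIY : Jop (Iop Y) = Iop Y := by rw [hJI, hY, map_neg, neg_neg]
    have hbr : ⁅Iop X, Iop Y⁆ = ⁅X, Y⁆ + Iop (⁅Iop X, Y⁆ + ⁅X, Iop Y⁆) := by
      have h1 := hNI X Y
      rw [hI2, neg_neg] at h1
      linear_combination (norm := module) -h1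
    have hJB : Jop ⁅Iop X, Iop Y⁆ = ⁅Iop X, Iop Y⁆ := hHinv _ _ hJIX hJIY
    rw [hbr, map_add, hJW, hJI] at hJB
    have h2 : Iop (Jop (⁅Iop X, Y⁆ + ⁅X, Iop Y⁆)) =
        -((2:ℝ) • ⁅X, Y⁆) - Iop (⁅Iop X, Y⁆ + ⁅X, Iop Y⁆) := by
      linear_combination (norm := module) -hJB
    have hJS : Jop (⁅Iop X, Y⁆ + ⁅X, Iop Y⁆) =
        (2:ℝ) • Iop ⁅X, Y⁆ - (⁅Iop X, Y⁆ + ⁅X, Iop Y⁆) := by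
      have h5 : Iop (-((2:ℝ) • ⁅X, Y⁆) - Iop (⁅Iop X, Y⁆ + ⁅X, Iop Y⁆)) =
          -((2:ℝ) • Iop ⁅X, Y⁆) + (⁅Iop X, Y⁆ + ⁅X, Iop Y⁆) := by
        rw [map_sub, map_neg, LinearMap.map_smul_of_tower, hI2]
        module
      have h4 := congrArg Iop h2
      rw [hI2, h5] at h4
      linear_combination (norm := module) -h4
    refine ⟨(1 + a) • ⁅X, Y⁆ + b • (⁅Iop X, Y⁆ + ⁅X, Iop Y⁆) - b • Iop ⁅X, Y⁆, ?_, ?_⟩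
    · rw [map_sub, map_add, LinearMap.map_smul_of_tower, LinearMap.map_smul_of_tower,
        LinearMap.map_smul_of_tower, hJS, hJW, hJI, hJW, map_neg]
      module
    · simp only [mulOnePlusZ, hAL, hLA, hSL, hLS, hbr, map_sub, map_add,
        LinearMap.map_smul_of_tower, hI2]
      match_scalars <;>
        first
        | ring1
        | linear_combination hz
        | linear_combination -hz
        | linear_combination b * hz
        | linear_combination -b * hz
        | linear_combination (2*b) * hz
        | linear_combination (-(2*b)) * hz
        | linear_combination (b*(1+a)) * hz
        | linear_combination (-(b*(1+a))) * hz
        | linear_combination (b^2) * hz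
        | linear_combination (-(b^2)) * hz
        | linear_combination (2:ℝ) * hz
        | linear_combination (-2:ℝ) * hz
        | linear_combination (1+a) * hz
        | linear_combination (-(1+a)) * hz

end
end
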